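/- Let δ: Q₁ → G be an arrow weighting on a connected quiver Q, extended to walks by δ(a_n^{e_n}⋯a_1^{e_1}) = δ(a_n)^{e_n}⋯δ(a_1)^{e_1} with e_i = ±1. Then δ is connected (for all vertices x, y and all g ∈ G there is a walk from x to y of weight g) if and only if the smash coproduct quiver Q ⋊ G is connected as an undirected graph. -/

import Mathlib

open Quiver

universe u v

variable {V : Type u} [Quiver.{v + 1} V] {G : Type*} [Group G]

/-- The smash coproduct quiver `Q ⋊ G` attached to an arrow weighting
`δ : Q₁ → G`: vertices are pairs `x ⋊ g`. -/
structure SmashQ (V : Type u) [Quiver.{v + 1} V] (G : Type*) [Group G]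
    (δ : ∀ {a b : V}, (a ⟶ b) → G) where
  v : V
  g : G

/-- Arrows of `Q ⋊ G`: `a ⋊ g` goes from `s(a) ⋊ g` to `t(a) ⋊ δ(a)g`. -/
instance {δ : ∀ {a b : V}, (a ⟶ b) → G} : Quiver (SmashQ V G @δ) :=
  ⟨fun p q => {e : p.v ⟶ q.v // q.g = δ e * p.g}⟩

/-- The weight of a walk (a path in the symmetrification of `Q`):
`δ(a_n^{e_n} ⋯ a_1^{e_1}) = δ(a_n)^{e_n} ⋯ δ(a_1)^{e_1}` with `e_i = ±1`. -/
def wtWalk (δ : ∀ {a b : V}, (a ⟶ b) → G) :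
    ∀ {a b : Quiver.Symmetrify V}, Quiver.Path a b → G
  | _, _, .nil => 1
  | _, _, .cons p e =>
      (Sum.elim (fun f => δ f) (fun f => (δ f)⁻¹) e) * wtWalk @δ p

/-- Lift a walk in `Q` of weight `h` to a walk in `Q ⋊ G` from `⟨x, g⟩` to `⟨y, h * g⟩`. -/
lemma smash_lift (δ : ∀ {a b : V}, (a ⟶ b) → G) {x y : Quiver.Symmetrify V}
    (w : Quiver.Path x y) : ∀ g : G,
      Nonempty (Quiver.Path (V := Quiver.Symmetrify (SmashQ V G @δ))
        ⟨x, g⟩ ⟨y, wtWalk @δ w * g⟩) := by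
  induction w with
  | nil =>
    intro g
    simp only [wtWalk, one_mul]
    exact ⟨Quiver.Path.nil⟩
  | @cons b c w e ih =>
    intro g
    obtain ⟨p⟩ := ih g
    rcases e with f | f
    · simp only [wtWalk, Sum.elim_inl, mul_assoc]
      exact ⟨p.cons (Sum.inl (⟨f, rfl⟩ :
        (⟨b, wtWalk @δ w * g⟩ : SmashQ V G @δ) ⟶ ⟨c, δ f * (wtWalk @δ w * g)⟩))⟩
    · simp only [wtWalk, Sum.elim_inr, mul_assoc]
      exact ⟨p.cons (Sum.inr (⟨f, (mul_inv_cancel_left _ _).symm⟩ :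
        (⟨c, (δ f)⁻¹ * (wtWalk @δ w * g)⟩ : SmashQ V G @δ) ⟶ ⟨b, wtWalk @δ w * g⟩))⟩

/-- Project a walk in `Q ⋊ G` to a walk in `Q` of weight `q.g * p.g⁻¹`. -/
lemma smash_proj (δ : ∀ {a b : V}, (a ⟶ b) → G) :
    ∀ {p q : Quiver.Symmetrify (SmashQ V G @δ)} (_ : Quiver.Path p q),
      ∃ w : Quiver.Path (V := Quiver.Symmetrify V) p.v q.v,
        wtWalk @δ w = q.g * p.g⁻¹
  | _, _, .nil => ⟨Quiver.Path.nil, (wtWalk.eq_1 ..).trans (by simp)⟩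
  | p, q, .cons w e => by
    obtain ⟨w', hw'⟩ := smash_proj @δ w
    rcases e with ⟨f, hf⟩ | ⟨f, hf⟩
    · exact ⟨w'.cons (Sum.inl f), (wtWalk.eq_2 ..).trans (by simp [wtWalk, hw', hf, mul_assoc])⟩
    · refine ⟨w'.cons (Sum.inr f), (wtWalk.eq_2 ..).trans ?_⟩
      simp [wtWalk, hw', hf, mul_assoc]

/-- Let `δ : Q₁ → G` be an arrow weighting on a connected
quiver `Q`. Then `δ` is connected (for all vertices `x, y` and every `g ∈ G`
there is a walk from `x` to `y` of weight `g`) if and only if the smash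
coproduct quiver `Q ⋊ G` is connected as an undirected graph. -/
theorem connected_weighting_iff_smash_connected (δ : ∀ {a b : V}, (a ⟶ b) → G)
    (hQ : ∀ x y : V,
      Nonempty (Quiver.Path (Quiver.Symmetrify.of.obj x) (Quiver.Symmetrify.of.obj y))) :
    (∀ (x y : V) (g : G),
      ∃ w : Quiver.Path (Quiver.Symmetrify.of.obj x) (Quiver.Symmetrify.of.obj y),
        wtWalk @δ w = g)
    ↔ ∀ p q : SmashQ V G @δ,
        Nonempty (Quiver.Path (Quiver.Symmetrify.of.obj p) (Quiver.Symmetrify.of.obj q)) := by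
  constructor
  · intro h p q
    obtain ⟨w, hw⟩ := h p.v q.v (q.g * p.g⁻¹)
    obtain ⟨pp⟩ := smash_lift @δ w p.g
    rw [hw, inv_mul_cancel_right] at pp
    exact ⟨pp⟩
  · intro h x y g
    obtain ⟨pp⟩ := h ⟨x, 1⟩ ⟨y, g⟩
    obtain ⟨w, hw⟩ := smash_proj @δ pp
    refine ⟨w, hw.trans ?_⟩
    show g * (1 : G)⁻¹ = g
    simp
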